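/- Let T_4 be the diagonal linear operator on the space ℝ_4[x] of real polynomials of degree at most 4 defined by T_4(x^i) = λ_i·x^i with (λ_0, λ_1, λ_2, λ_3, λ_4) = (1/29, 1/68, 1/123, 1/200, 1/305). Then T_4 preserves the set of positive polynomials in ℝ_4[x], i.e., for every p of degree ≤ 4 with p(x) > 0 for all real x, (T_4(p))(x) > 0 for all real x; but its inverse does not preserve hyperbolicity: the polynomial (x+1)^4 is hyperbolic (all its complex roots are real), while its preimage T_4^{−1}((x+1)^4) = 305x^4 + 800x^3 + 738x^2 + 272x + 29 has a non-real complex root. -/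

import Mathlib

open Polynomial

/-- The diagonal sequence `(1/29, 1/68, 1/123, 1/200, 1/305)`. -/
noncomputable def lam13 : ℕ → ℝ
  | 0 => 1 / 29
  | 1 => 1 / 68
  | 2 => 1 / 123
  | 3 => 1 / 200
  | 4 => 1 / 305
  | _ => 0

/-- The diagonal transformation `T₄` on `ℝ_4[x]` associated to `lam13`. -/
noncomputable def T4 (p : Polynomial ℝ) : Polynomial ℝ :=
  ∑ i ∈ Finset.range 5, (lam13 i * p.coeff i) • Polynomial.X ^ i

theorem stmt_13 :
    (∀ p : Polynomial ℝ, p.natDegree ≤ 4 → (∀ x : ℝ, 0 < p.eval x) →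
      ∀ x : ℝ, 0 < (T4 p).eval x) ∧
    (∀ z : ℂ, Polynomial.aeval z (((Polynomial.X + 1) ^ 4 : Polynomial ℝ)) = 0 → z.im = 0) ∧
    T4 (305 * Polynomial.X ^ 4 + 800 * Polynomial.X ^ 3 + 738 * Polynomial.X ^ 2 +
        272 * Polynomial.X + 29) = (Polynomial.X + 1) ^ 4 ∧
    (∃ z : ℂ, Polynomial.aeval z ((305 * Polynomial.X ^ 4 + 800 * Polynomial.X ^ 3 +
        738 * Polynomial.X ^ 2 + 272 * Polynomial.X + 29 : Polynomial ℝ)) = 0 ∧ z.im ≠ 0) := by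
  refine ⟨?_, ?_, ?_, ?_⟩
  · -- T4 preserves positivity: (T4 p)(x) is a positive combination of values of p
    intro p hp hpos x
    have e : ∀ t : ℝ, p.eval (t * x) = ∑ i ∈ Finset.range 5, p.coeff i * (t * x) ^ i :=
      fun t => eval_eq_sum_range' (by omega) _
    have key : (T4 p).eval x =
        (150827/2485713888) * p.eval ((-1/2) * x)
        + (202607/1183673280) * p.eval ((-3/10) * x)
        + (6064729/388392795) * p.eval ((1/5) * x)
        + (4902535/710203968) * p.eval ((1/2) * x)
        + (20832023/1775509920) * p.eval ((7/10) * x) := by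
      rw [T4]
      simp only [eval_finset_sum, eval_smul, eval_pow, eval_X, smul_eq_mul, e,
        Finset.sum_range_succ, Finset.sum_range_zero, lam13]
      simp only [eval_add, eval_smul, smul_eq_mul, eval_pow, eval_X, eval_one, eval_zero]
      ring
    rw [key]
    have h1 := hpos ((-1/2) * x)
    have h2 := hpos ((-3/10) * x)
    have h3 := hpos ((1/5) * x)
    have h4 := hpos ((1/2) * x)
    have h5 := hpos ((7/10) * x)
    linarith
  · -- (x+1)^4 is hyperbolic
    intro z h
    simp only [map_pow, map_add, aeval_X, map_one] at h
    have h1 : z + 1 = 0 := pow_eq_zero_iff (n := 4) (by norm_num) |>.mp h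
    have h2 : z = -1 := by linear_combination h1
    simp [h2]
  · -- T4 of the quartic equals (x+1)^4
    have c0 : (305 * X ^ 4 + 800 * X ^ 3 + 738 * X ^ 2 + 272 * X + 29 : Polynomial ℝ).coeff 0 = 29 := by
      simp [coeff_ofNat_mul, coeff_X]
    have c1 : (305 * X ^ 4 + 800 * X ^ 3 + 738 * X ^ 2 + 272 * X + 29 : Polynomial ℝ).coeff 1 = 272 := by
      simp [coeff_ofNat_mul, coeff_X]
    have c2 : (305 * X ^ 4 + 800 * X ^ 3 + 738 * X ^ 2 + 272 * X + 29 : Polynomial ℝ).coeff 2 = 738 := by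
      simp [coeff_ofNat_mul, coeff_X]
    have c3 : (305 * X ^ 4 + 800 * X ^ 3 + 738 * X ^ 2 + 272 * X + 29 : Polynomial ℝ).coeff 3 = 800 := by
      simp [coeff_ofNat_mul, coeff_X]
    have c4 : (305 * X ^ 4 + 800 * X ^ 3 + 738 * X ^ 2 + 272 * X + 29 : Polynomial ℝ).coeff 4 = 305 := by
      simp [coeff_ofNat_mul, coeff_X]
    rw [T4]
    simp only [Finset.sum_range_succ, Finset.sum_range_zero, lam13, c0, c1, c2, c3, c4]
    simp only [smul_eq_C_mul]
    norm_num [map_ofNat]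
    ring
  · -- the preimage has a non-real root
    by_contra hcon
    push_neg at hcon
    have H : ∀ z : ℂ, 305 * z ^ 4 + 800 * z ^ 3 + 738 * z ^ 2 + 272 * z + 29 = 0 → z.im = 0 := by
      intro z hz
      apply hcon z
      simp only [map_add, map_mul, map_pow, aeval_X, map_ofNat]
      convert hz using 2
    set Qc : Polynomial ℂ := C 305 * X ^ 4 + C 800 * X ^ 3 + C 738 * X ^ 2 + C 272 * X + C 29 with hQc
    have hev : ∀ z : ℂ, Qc.eval z = 305 * z ^ 4 + 800 * z ^ 3 + 738 * z ^ 2 + 272 * z + 29 := by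
      intro z; simp [hQc]
    have hne : Qc ≠ 0 := by
      intro h0
      have := hev 0
      rw [h0] at this
      norm_num at this
    have hdeg : Qc.natDegree = 4 := by
      rw [hQc]; compute_degree!
    have hsplit : Splits Qc := IsAlgClosed.splits Qc
    have hcard : Qc.roots.card = 4 := by
      rw [← hdeg]; exact (splits_iff_card_roots).mp hsplit
    have hlead : Qc.leadingCoeff = 305 := by
      rw [leadingCoeff, hdeg, hQc]
      simp [coeff_X_pow, coeff_C]
    have hm1 : (-1 : ℂ) ∈ Qc.roots := by
      rw [mem_roots hne]
      show Qc.eval (-1) = 0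
      rw [hev]; ring
    obtain ⟨s, hs⟩ := Multiset.exists_cons_of_mem hm1
    have hscard : s.card = 3 := by
      have := hcard
      rw [hs] at this
      simpa using this
    obtain ⟨r1, r2, r3, hr⟩ := Multiset.card_eq_three.mp hscard
    have hfac : Qc = C 305 * ((X - C (-1)) * ((X - C r1) * ((X - C r2) * (X - C r3)))) := by
      have := hsplit.eq_prod_roots
      rw [hlead, hs, hr] at this
      simpa [Multiset.map_cons, Multiset.prod_cons, mul_assoc] using this
    have him : ∀ r ∈ Qc.roots, r.im = 0 := by
      intro r hrm
      exact H r (by rw [← hev r]; exact (mem_roots hne).mp hrm)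
    have h1m : r1 ∈ Qc.roots := by rw [hs, hr]; simp
    have h2m : r2 ∈ Qc.roots := by rw [hs, hr]; simp
    have h3m : r3 ∈ Qc.roots := by rw [hs, hr]; simp
    set a : ℝ := r1.re
    set b : ℝ := r2.re
    set c : ℝ := r3.re
    have ha : r1 = (a : ℂ) := by apply Complex.ext <;> simp [him r1 h1m, a]
    have hb : r2 = (b : ℂ) := by apply Complex.ext <;> simp [him r2 h2m, b]
    have hc : r3 = (c : ℂ) := by apply Complex.ext <;> simp [him r3 h3m, c]
    have key : ∀ z : ℂ, 305 * z ^ 4 + 800 * z ^ 3 + 738 * z ^ 2 + 272 * z + 29 =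
        305 * ((z - (-1)) * ((z - (a:ℂ)) * ((z - (b:ℂ)) * (z - (c:ℂ))))) := by
      intro z
      rw [← hev z]
      conv_lhs => rw [hfac, ha, hb, hc]
      simp [eval_mul, eval_sub, eval_C, eval_X]
    have C0 : (29 : ℂ) = 305 * ((0 - (-1)) * ((0 - (a:ℂ)) * ((0 - (b:ℂ)) * (0 - (c:ℂ))))) := by
      linear_combination key 0
    have C1 : (2144 : ℂ) = 305 * ((1 - (-1)) * ((1 - (a:ℂ)) * ((1 - (b:ℂ)) * (1 - (c:ℂ))))) := by
      linear_combination key 1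
    have C2 : (917 : ℂ) = 305 * (((-2) - (-1)) * (((-2) - (a:ℂ)) * (((-2) - (b:ℂ)) * ((-2) - (c:ℂ))))) := by
      linear_combination key (-2)
    have R0 : (29 : ℝ) = 305 * ((0 - (-1)) * ((0 - a) * ((0 - b) * (0 - c)))) := by
      exact_mod_cast C0
    have R1 : (2144 : ℝ) = 305 * ((1 - (-1)) * ((1 - a) * ((1 - b) * (1 - c)))) := by
      exact_mod_cast C1
    have R2 : (917 : ℝ) = 305 * (((-2) - (-1)) * (((-2) - a) * (((-2) - b) * ((-2) - c)))) := by
      exact_mod_cast C2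
    have s1 : a + b + c = -99/61 := by
      linear_combination (-1/610) * R0 + (1/1830) * R1 + (-1/1830) * R2
    have s2 : a*b + a*c + b*c = 243/305 := by
      linear_combination (1/610) * R0 + (-1/915) * R1 + (-1/1830) * R2
    have s3 : a*b*c = -29/305 := by
      linear_combination (1/305) * R0
    have key2 : ((a-b)*(a-c)*(b-c))^2 = -13652928/1730730125 := by
      linear_combination
        (((a+b+c) + (-99/61)) * (a*b+a*c+b*c)^2
          - 4*((a+b+c)^2 + (a+b+c)*(-99/61) + (-99/61)^2) * (a*b*c)
          + 18*(a*b+a*c+b*c)*(a*b*c)) * s1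
        + ((-99/61)^2*((a*b+a*c+b*c) + 243/305)
          - 4*((a*b+a*c+b*c)^2 + (a*b+a*c+b*c)*(243/305) + (243/305)^2)
          + 18*(-99/61)*(a*b*c)) * s2
        + (-4*(-99/61)^3 + 18*(-99/61)*(243/305) - 27*((a*b*c) + (-29/305))) * s3
    have hnn := sq_nonneg ((a-b)*(a-c)*(b-c))
    rw [key2] at hnn
    norm_num at hnn
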